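/- Let a : ℕ → ℝ be a sequence such that for every nonzero k ∈ ℤ, (1/N)∑_{n=1}^N e^{2πi k a(n)} → 0 (i.e. (a(n)) is equidistributed mod 1), and let α be irrational. Then the sequence (⌊a(n)⌋·α)_{n∈ℕ} is equidistributed mod 1. -/

import Mathlib

open Filter Real MeasureTheory intervalIntegral

noncomputable section

namespace Stmt15Aux

def E (x : ℝ) : ℂ := Complex.exp (2 * π * Complex.I * x)
lemma E_eq (x : ℝ) : E x = Complex.exp ((2 * π * x : ℝ) * Complex.I) := by rw [E]; push_cast; ring_nf
lemma E_add (x y : ℝ) : E (x + y) = E x * E y := by rw [E, E, E, ← Complex.exp_add]; push_cast; ring_nf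
lemma norm_E (x : ℝ) : ‖E x‖ = 1 := by rw [E_eq]; exact Complex.norm_exp_ofReal_mul_I _
lemma E_int (n : ℤ) : E n = 1 := by
  rw [E, show (2 * (π:ℂ) * Complex.I * ((n:ℝ):ℂ)) = (n:ℂ) * (2 * π * Complex.I) by push_cast; ring]
  exact Complex.exp_int_mul_two_pi_mul_I n
lemma continuous_E : Continuous E := Complex.continuous_exp.comp (continuous_const.mul Complex.continuous_ofReal)
lemma E_nat_pow (m : ℕ) (s : ℝ) : E (m * s) = E s ^ m := by
  rw [E, E, ← Complex.exp_nat_mul]; push_cast; ring_nf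

lemma norm_exp_mul_I_sub_one_le (r : ℝ) : ‖Complex.exp ((r:ℂ) * Complex.I) - 1‖ ≤ |r| := by
  have h1 : Complex.exp ((r:ℂ) * Complex.I) - 1
      = ((Real.cos r - 1 : ℝ) : ℂ) + ((Real.sin r : ℝ) : ℂ) * Complex.I := by
    rw [Complex.exp_mul_I, ← Complex.ofReal_cos, ← Complex.ofReal_sin]; push_cast; ring
  rw [h1, Complex.norm_add_mul_I]
  have h2 : (Real.cos r - 1) ^ 2 + Real.sin r ^ 2 ≤ |r| ^ 2 := by
    nlinarith [Real.sin_sq_add_cos_sq r, Real.one_sub_sq_div_two_le_cos (x := r), sq_abs r]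
  calc Real.sqrt ((Real.cos r - 1) ^ 2 + Real.sin r ^ 2) ≤ Real.sqrt (|r| ^ 2) :=
        Real.sqrt_le_sqrt h2
    _ = |r| := by rw [Real.sqrt_sq (abs_nonneg r)]

lemma norm_E_sub_E (x y : ℝ) : ‖E x - E y‖ ≤ 2 * π * |x - y| := by
  have h : E x - E y = E y * (E (x - y) - 1) := by
    rw [mul_sub, ← E_add, mul_one]; congr 1; ring_nf
  rw [h, norm_mul, norm_E, one_mul]
  have := norm_exp_mul_I_sub_one_le (2 * π * (x - y))
  rw [← E_eq] at this
  calc ‖E (x - y) - 1‖ ≤ |2 * π * (x - y)| := this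
    _ = 2 * π * |x - y| := by
        rw [abs_mul, abs_of_nonneg (by positivity : (0:ℝ) ≤ 2 * π)]

/-- Dirichlet-type kernel. -/
def D (L : ℕ) (t : ℝ) : ℂ := ∑ m ∈ Finset.range L, E (m * t)

/-- Fejér kernel. -/
def F (L : ℕ) (t : ℝ) : ℝ := ‖D L t‖ ^ 2 / L

lemma F_nonneg (L : ℕ) (t : ℝ) : 0 ≤ F L t :=
  div_nonneg (by positivity) (Nat.cast_nonneg L)

lemma continuous_D (L : ℕ) : Continuous (D L) :=
  continuous_finset_sum _ fun m _ => continuous_E.comp (continuous_const.mul continuous_id)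

lemma continuous_F (L : ℕ) : Continuous (F L) :=
  (((continuous_D L).norm.pow 2).div_const _)

lemma E_periodic_int (x : ℝ) (n : ℤ) : E (x + n) = E x := by
  rw [E_add, E_int, mul_one]

lemma D_periodic (L : ℕ) : Function.Periodic (D L) 1 := by
  intro t; unfold D
  refine Finset.sum_congr rfl fun m _ => ?_
  have : (m:ℝ) * (t + 1) = m * t + (m:ℤ) := by push_cast; ring
  rw [this, E_periodic_int]

lemma F_periodic (L : ℕ) : Function.Periodic (F L) 1 := by
  intro t; unfold F; rw [D_periodic]

/-- `E s ≠ 1` for `s` in the punctured interval. -/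
lemma E_ne_one {s : ℝ} (h1 : |s| ≤ 1/2) (h2 : s ≠ 0) : E s ≠ 1 := by
  intro h
  rw [E, Complex.exp_eq_one_iff] at h
  obtain ⟨n, hn⟩ := h
  have h2πI : (2 * (π:ℂ) * Complex.I) ≠ 0 := by
    have : (π:ℂ) ≠ 0 := Complex.ofReal_ne_zero.2 Real.pi_ne_zero
    simp [this, Complex.I_ne_zero]
  have hs : (s:ℂ) = (n:ℂ) := by
    have : (2 * (π:ℂ) * Complex.I) * s = (2 * (π:ℂ) * Complex.I) * n := by
      rw [hn]; ring
    exact mul_left_cancel₀ h2πI this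
  have hsn : s = (n:ℝ) := by exact_mod_cast hs
  have hn0 : n = 0 := by
    rcases abs_le.1 h1 with ⟨hl, hr⟩
    rw [hsn] at hl hr
    have : -1 < (n:ℝ) := by linarith
    have h2' : (n:ℝ) < 1 := by linarith
    have := (by exact_mod_cast this : (-1:ℤ) < n)
    have := (by exact_mod_cast h2' : n < 1)
    omega
  exact h2 (by rw [hsn, hn0]; norm_num)


lemma sin_pi_mul_ge {s : ℝ} (h0 : 0 ≤ s) (h1 : s ≤ 1/2) : 2 * s ≤ Real.sin (π * s) := by
  have h := Real.mul_le_sin (x := π * s) (by positivity) (by nlinarith [Real.pi_pos])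
  calc 2 * s = 2 / π * (π * s) := by
        rw [div_mul_eq_mul_div, eq_div_iff Real.pi_ne_zero]; ring
    _ ≤ Real.sin (π * s) := h

lemma norm_E_sub_one (s : ℝ) : ‖E s - 1‖ = 2 * |Real.sin (π * s)| := by
  have h1 : E s - 1
      = ((Real.cos (2*π*s) - 1 : ℝ) : ℂ) + ((Real.sin (2*π*s) : ℝ) : ℂ) * Complex.I := by
    rw [E_eq, Complex.exp_mul_I, ← Complex.ofReal_cos, ← Complex.ofReal_sin]; push_cast; ring
  rw [h1, Complex.norm_add_mul_I]
  have h2 : (Real.cos (2*π*s) - 1) ^ 2 + Real.sin (2*π*s) ^ 2 = (2 * |Real.sin (π * s)|) ^ 2 := by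
    have hc : Real.cos (2*π*s) = 2 * Real.cos (π*s) ^ 2 - 1 := by
      rw [show 2*π*s = 2*(π*s) by ring]; exact Real.cos_two_mul _
    have hsq := Real.sin_sq_add_cos_sq (π*s)
    have hsq2 := Real.sin_sq_add_cos_sq (2*π*s)
    have habs : |Real.sin (π*s)| ^ 2 = Real.sin (π*s) ^ 2 := sq_abs _
    nlinarith
  rw [h2, Real.sqrt_sq (by positivity)]

/-- Norm bound on the Dirichlet kernel away from integers. -/
lemma norm_D_le {s : ℝ} (L : ℕ) (h1 : |s| ≤ 1/2) (h2 : s ≠ 0) : ‖D L s‖ ≤ 1 / (2 * |s|) := by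
  have hne := E_ne_one h1 h2
  have hD : D L s = (E s ^ L - 1) / (E s - 1) := by
    unfold D
    simp_rw [E_nat_pow]
    exact geom_sum_eq hne L
  have hden : ‖E s - 1‖ = 2 * |Real.sin (π * s)| := norm_E_sub_one s
  have hsin : 2 * |s| ≤ |Real.sin (π * s)| := by
    rcases le_or_gt 0 s with hs | hs
    · rw [abs_of_nonneg hs]
      exact le_trans (sin_pi_mul_ge hs (by linarith [abs_le.1 h1])) (le_abs_self _)
    · have h0 : 0 ≤ -s := by linarith
      have h1' : -s ≤ 1/2 := by have := (abs_le.1 h1).1; linarith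
      have := sin_pi_mul_ge h0 h1'
      rw [abs_of_neg hs]
      calc 2 * -s ≤ Real.sin (π * -s) := this
        _ = -Real.sin (π * s) := by rw [show π * -s = -(π * s) by ring, Real.sin_neg]
        _ ≤ |Real.sin (π * s)| := neg_le_abs _
  have hnum : ‖E s ^ L - 1‖ ≤ 2 := by
    calc ‖E s ^ L - 1‖ ≤ ‖E s ^ L‖ + ‖(1:ℂ)‖ := norm_sub_le _ _
      _ = ‖E s‖ ^ L + 1 := by rw [norm_pow]; norm_num
      _ = 2 := by rw [norm_E]; norm_num
  have hspos : 0 < |s| := abs_pos.2 h2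
  have hge : 4 * |s| ≤ ‖E s - 1‖ := by rw [hden]; linarith
  rw [hD, norm_div]
  calc ‖E s ^ L - 1‖ / ‖E s - 1‖ ≤ 2 / (4 * |s|) :=
        div_le_div₀ (by norm_num) hnum (by positivity) hge
    _ = 1 / (2 * |s|) := by rw [div_eq_div_iff (by positivity) (by positivity)]; ring

lemma F_mul_sq_le {s : ℝ} {M : ℕ} (hM : 1 ≤ M) (h1 : |s| ≤ 1/2) :
    F M s * s ^ 2 ≤ 1 / (4 * M) := by
  have hMpos : (0:ℝ) < M := by exact_mod_cast hM
  rcases eq_or_ne s 0 with rfl | hs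
  · simp [F]
  · have hD := norm_D_le M h1 hs
    have hspos : 0 < |s| := abs_pos.2 hs
    have h2 : ‖D M s‖ ^ 2 * s ^ 2 ≤ 1 / 4 := by
      have h3 : ‖D M s‖ * |s| ≤ 1 / 2 := by
        calc ‖D M s‖ * |s| ≤ (1 / (2 * |s|)) * |s| :=
              mul_le_mul_of_nonneg_right hD (abs_nonneg s)
          _ = 1 / 2 := by field_simp
      have h4 : (‖D M s‖ * |s|) ^ 2 ≤ (1/2) ^ 2 := by
        have := mul_self_le_mul_self (by positivity) h3
        nlinarith
      calc ‖D M s‖ ^ 2 * s ^ 2 = (‖D M s‖ * |s|) ^ 2 := by rw [mul_pow, sq_abs]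
        _ ≤ (1/2)^2 := h4
        _ = 1 / 4 := by norm_num
    unfold F
    rw [div_mul_eq_mul_div, div_le_div_iff₀ hMpos (by positivity)]
    nlinarith

lemma F_le (L : ℕ) (t : ℝ) : F L t ≤ L := by
  have : ‖D L t‖ ≤ L := by
    calc ‖D L t‖ ≤ ∑ m ∈ Finset.range L, ‖E (m * t)‖ := norm_sum_le _ _
      _ = ∑ m ∈ Finset.range L, (1:ℝ) := Finset.sum_congr rfl fun m _ => norm_E _
      _ = L := by simp
  rcases Nat.eq_zero_or_pos L with rfl | hL
  · simp [F, D]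
  · have hLpos : (0:ℝ) < L := by exact_mod_cast hL
    rw [F, div_le_iff₀ hLpos]
    nlinarith [norm_nonneg (D L t)]

/-- Lower bound for the Fejér kernel near integers. -/
lemma F_lower {L : ℕ} (hL : 1 ≤ L) {t : ℝ} (h : |t - round t| ≤ 1 / (8 * L)) :
    (L:ℝ) / 4 ≤ F L t := by
  have hLpos : (0:ℝ) < L := by exact_mod_cast hL
  set u : ℝ := t - round t with hu
  have hre : ∀ m : ℕ, (E (m * t)).re = Real.cos (2 * π * m * u) := by
    intro m
    rw [E_eq, Complex.exp_ofReal_mul_I_re]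
    have : 2 * π * (m * t) = 2 * π * m * u + (((m : ℤ) * round t : ℤ) : ℝ) * (2 * π) := by
      rw [hu]; push_cast; ring
    rw [this, Real.cos_add_int_mul_two_pi]
  have hpisq : π ^ 2 < 10 := by nlinarith [Real.pi_lt_d2, Real.pi_pos]
  have hcos : ∀ m ∈ Finset.range L, (2:ℝ)/3 ≤ (E (m * t)).re := by
    intro m hm
    rw [hre]
    have hmL : (m:ℝ) ≤ L := by
      exact_mod_cast le_of_lt (Finset.mem_range.1 hm)
    have h1 := Real.one_sub_sq_div_two_le_cos (x := 2 * π * m * u)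
    have habs : |2 * π * m * u| ≤ π / 4 := by
      have hmnn : (0:ℝ) ≤ m := Nat.cast_nonneg m
      have : |2 * π * m * u| = 2 * π * m * |u| := by
        rw [abs_mul, abs_of_nonneg (by positivity : (0:ℝ) ≤ 2 * π * m)]
      rw [this]
      calc 2 * π * m * |u| ≤ 2 * π * L * (1 / (8 * L)) := by
            apply mul_le_mul (by nlinarith [Real.pi_pos]) h (abs_nonneg u) (by positivity)
        _ = π / 4 := by field_simp; ring
    have h2 : (2 * π * m * u) ^ 2 ≤ π ^ 2 / 16 := by
      have h3 : (2 * π * m * u) ^ 2 ≤ (π / 4) ^ 2 := by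
        rw [← sq_abs]
        exact pow_le_pow_left₀ (abs_nonneg _) habs 2
      nlinarith
    nlinarith
  have hRe : (L:ℝ) * (2/3) ≤ (D L t).re := by
    have : (D L t).re = ∑ m ∈ Finset.range L, (E (m * t)).re := by
      unfold D; exact Complex.re_sum _ _
    rw [this]
    calc (L:ℝ) * (2/3) = ∑ _m ∈ Finset.range L, (2:ℝ)/3 := by
          rw [Finset.sum_const, Finset.card_range]; ring
      _ ≤ ∑ m ∈ Finset.range L, (E (m * t)).re := Finset.sum_le_sum hcos
  have hnorm : (D L t).re ≤ ‖D L t‖ := Complex.re_le_norm _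
  rw [F, le_div_iff₀ hLpos]
  nlinarith


/-! ### The sawtooth phase function -/

def g (θ : ℝ) (t : ℝ) : ℂ := E (-θ * Int.fract t)

lemma norm_g (θ t : ℝ) : ‖g θ t‖ = 1 := norm_E _

lemma measurable_g (θ : ℝ) : Measurable (g θ) :=
  (continuous_E.measurable).comp (measurable_fract.const_mul (-θ))

lemma g_periodic (θ : ℝ) : Function.Periodic (g θ) 1 := by
  intro t; unfold g; rw [Int.fract_add_one]

lemma g_sub_int (θ : ℝ) (t : ℝ) (n : ℤ) : g θ (t - n) = g θ t := by
  unfold g; rw [Int.fract_sub_intCast]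

/-- Measurable and bounded implies interval integrable. -/
lemma II_of_bdd {f : ℝ → ℂ} (hf : Measurable f) {C : ℝ} (h : ∀ x, ‖f x‖ ≤ C) (a b : ℝ) :
    IntervalIntegrable f volume a b := by
  rw [intervalIntegrable_iff]
  haveI : IsFiniteMeasure (volume.restrict (Set.uIoc a b)) :=
    ⟨by rw [Measure.restrict_apply_univ]; exact measure_Ioc_lt_top⟩
  refine (integrable_const C).mono' hf.aestronglyMeasurable.restrict ?_
  exact Eventually.of_forall h

/-- Fourier coefficient of `g`. -/
def ghat (θ : ℝ) (j : ℝ) : ℂ := ∫ u in (0:ℝ)..1, E (-j * u) * g θ u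

lemma measurable_E_mul_g (θ c d : ℝ) : Measurable fun u : ℝ => E (c * u + d) * g θ u :=
  ((continuous_E.measurable).comp ((measurable_id.const_mul c).add_const d)).mul (measurable_g θ)

lemma norm_E_mul_g (θ c d : ℝ) (u : ℝ) : ‖E (c * u + d) * g θ u‖ = 1 := by
  rw [norm_mul, norm_E, norm_g, mul_one]

lemma norm_ghat_le (θ j : ℝ) : ‖ghat θ j‖ ≤ 1 := by
  unfold ghat
  have := intervalIntegral.norm_integral_le_of_norm_le_const
    (a := 0) (b := 1) (C := 1) (f := fun u => E (-j * u) * g θ u)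
    (fun x _ => by rw [norm_mul, norm_E, norm_g, mul_one])
  simpa using this

/-- The key convolution identity. -/
lemma conv_eq (θ : ℝ) (j : ℤ) (t : ℝ) :
    ∫ s in (0:ℝ)..1, E ((j:ℝ) * s) * g θ (t - s) = E ((j:ℝ) * t) * ghat θ j := by
  set f : ℝ → ℂ := fun u => E ((j:ℝ) * (t - u)) * g θ u with hf
  have hper : Function.Periodic f 1 := by
    intro u
    simp only [hf]
    have h1 : (j:ℝ) * (t - (u + 1)) = (j:ℝ) * (t - u) + (-j : ℤ) := by push_cast; ring
    rw [h1, E_periodic_int, g_periodic]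
  have h2 : ∀ s : ℝ, E ((j:ℝ) * s) * g θ (t - s) = f (t - s) := by
    intro s
    simp only [hf]
    congr 2
    ring
  calc ∫ s in (0:ℝ)..1, E ((j:ℝ) * s) * g θ (t - s)
      = ∫ s in (0:ℝ)..1, f (t - s) := by simp_rw [h2]
    _ = ∫ u in (t - 1)..(t - 0), f u := intervalIntegral.integral_comp_sub_left f t
    _ = ∫ u in (t-1)..((t-1)+1), f u := by norm_num
    _ = ∫ u in (0:ℝ)..(0+1), f u := hper.intervalIntegral_add_eq (t-1) 0
    _ = ∫ u in (0:ℝ)..1, f u := by norm_num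
    _ = E ((j:ℝ) * t) * ghat θ j := by
        unfold ghat
        rw [← intervalIntegral.integral_const_mul]
        apply intervalIntegral.integral_congr
        intro u _
        simp only [hf]
        rw [← mul_assoc, ← E_add]
        congr 1
        ring

/-- Integral of a character over a period. -/
lemma intE_int (j : ℤ) (hj : j ≠ 0) : ∫ s in (0:ℝ)..1, E ((j:ℝ) * s) = 0 := by
  have hrw : ∀ s : ℝ, E ((j:ℝ) * s) = Complex.exp ((2 * π * Complex.I * j) * s) := by
    intro s; rw [E]; push_cast; ring_nf
  have hc : (2 * (π:ℂ) * Complex.I * j) ≠ 0 := by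
    have h1 : (π:ℂ) ≠ 0 := Complex.ofReal_ne_zero.2 Real.pi_ne_zero
    have h2 : (j:ℂ) ≠ 0 := Int.cast_ne_zero.2 hj
    simp [h1, h2, Complex.I_ne_zero]
  simp_rw [hrw]
  rw [integral_exp_mul_complex hc]
  have h1 : Complex.exp (2 * (π:ℂ) * Complex.I * j * ((1:ℝ):ℂ)) = 1 := by
    rw [Complex.ofReal_one, mul_one,
      show 2 * (π:ℂ) * Complex.I * j = (j:ℂ) * (2 * π * Complex.I) by ring]
    exact Complex.exp_int_mul_two_pi_mul_I j
  have h0 : Complex.exp (2 * (π:ℂ) * Complex.I * j * ((0:ℝ):ℂ)) = 1 := by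
    simp
  rw [h1, h0]
  simp

lemma intE_diag (m m' : ℕ) :
    ∫ s in (0:ℝ)..1, E (((m:ℝ) - m') * s) = if m = m' then 1 else 0 := by
  rcases eq_or_ne m m' with rfl | hne
  · simp only [sub_self, zero_mul, if_pos rfl]
    have : ∀ s : ℝ, E ((0:ℝ)) = 1 := fun _ => by simpa using E_int 0
    simp [E, intervalIntegral.integral_const]
  · rw [if_neg hne]
    have hcast : ((m:ℝ) - m') = (((m:ℤ) - m' : ℤ) : ℝ) := by push_cast; ring
    rw [hcast]
    apply intE_int
    intro hc
    apply hne
    omega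


lemma E_conj (x : ℝ) : (starRingEnd ℂ) (E x) = E (-x) := by
  rw [E, E, ← Complex.exp_conj]
  congr 1
  rw [map_mul, map_mul, map_mul, Complex.conj_I, map_ofNat, Complex.conj_ofReal,
    Complex.conj_ofReal]
  push_cast
  ring

/-- Fejér expansion as a double character sum (complex-valued). -/
lemma F_eq_sum (L : ℕ) (t : ℝ) :
    ((F L t : ℝ) : ℂ) = (L:ℂ)⁻¹ * ∑ m ∈ Finset.range L, ∑ m' ∈ Finset.range L,
      E (((m:ℝ) - m') * t) := by
  have hD2 : ((‖D L t‖^2 : ℝ) : ℂ) = D L t * (starRingEnd ℂ) (D L t) := by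
    rw [Complex.mul_conj]
    norm_cast
    rw [Complex.sq_norm]
  have hconj : (starRingEnd ℂ) (D L t) = ∑ m' ∈ Finset.range L, E (-((m':ℝ) * t)) := by
    unfold D
    rw [map_sum]
    exact Finset.sum_congr rfl fun m' _ => E_conj _
  have hprod : D L t * (starRingEnd ℂ) (D L t)
      = ∑ m ∈ Finset.range L, ∑ m' ∈ Finset.range L, E (((m:ℝ) - m') * t) := by
    rw [hconj]
    unfold D
    rw [Finset.sum_mul_sum]
    refine Finset.sum_congr rfl fun m _ => Finset.sum_congr rfl fun m' _ => ?_
    rw [← E_add]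
    congr 1
    ring
  rw [F, Complex.ofReal_div]
  rw [hD2, hprod]
  push_cast
  ring

/-- The smoothed function. -/
def T (θ : ℝ) (M : ℕ) (t : ℝ) : ℂ := ∫ s in (0:ℝ)..1, ((F M s : ℝ) : ℂ) * g θ (t - s)

lemma II_char_g (θ c t : ℝ) (a b : ℝ) :
    IntervalIntegrable (fun s => E (c * s) * g θ (t - s)) volume a b := by
  apply II_of_bdd (C := 1) _ _ a b
  · exact (continuous_E.measurable.comp (measurable_id.const_mul c)).mul
      ((measurable_g θ).comp (measurable_const.sub measurable_id))
  · intro x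
    rw [norm_mul, norm_E, norm_g, mul_one]

lemma II_F_g (θ t : ℝ) (M : ℕ) (a b : ℝ) :
    IntervalIntegrable (fun s => ((F M s : ℝ) : ℂ) * g θ (t - s)) volume a b := by
  apply II_of_bdd (C := (M:ℝ)) _ _ a b
  · exact (Complex.measurable_ofReal.comp (continuous_F M).measurable).mul
      ((measurable_g θ).comp (measurable_const.sub measurable_id))
  · intro x
    rw [norm_mul, norm_g, mul_one, Complex.norm_real, Real.norm_eq_abs,
      abs_of_nonneg (F_nonneg M x)]
    exact F_le M x

lemma measurable_char_g (θ c t : ℝ) :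
    Measurable (fun s : ℝ => E (c * s) * g θ (t - s)) :=
  (continuous_E.measurable.comp (measurable_id.const_mul c)).mul
    ((measurable_g θ).comp (measurable_const.sub measurable_id))

lemma II_inner (θ t : ℝ) (M : ℕ) (m : ℕ) :
    IntervalIntegrable
      (fun x => ∑ m' ∈ Finset.range M, E (((m:ℝ) - m') * x) * g θ (t - x)) volume 0 1 := by
  apply II_of_bdd (C := (M:ℝ)) _ _ 0 1
  · exact Finset.measurable_sum _ (fun m' _ => measurable_char_g θ _ t)
  · intro x
    calc ‖∑ m' ∈ Finset.range M, E (((m:ℝ) - m') * x) * g θ (t - x)‖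
        ≤ ∑ m' ∈ Finset.range M, ‖E (((m:ℝ) - m') * x) * g θ (t - x)‖ := norm_sum_le _ _
      _ = ∑ _m' ∈ Finset.range M, (1:ℝ) := Finset.sum_congr rfl fun m' _ => by
            rw [norm_mul, norm_E, norm_g, mul_one]
      _ = M := by simp

lemma T_eq (θ : ℝ) (M : ℕ) (t : ℝ) :
    T θ M t = (M:ℂ)⁻¹ * ∑ m ∈ Finset.range M, ∑ m' ∈ Finset.range M,
      E (((m:ℝ) - m') * t) * ghat θ ((m:ℝ) - m') := by
  unfold T
  have h1 : ∀ s : ℝ, ((F M s : ℝ) : ℂ) * g θ (t - s)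
      = (M:ℂ)⁻¹ * ∑ m ∈ Finset.range M, ∑ m' ∈ Finset.range M,
        E (((m:ℝ) - m') * s) * g θ (t - s) := by
    intro s
    rw [F_eq_sum]
    rw [mul_assoc]
    congr 1
    rw [Finset.sum_mul]
    refine Finset.sum_congr rfl fun m _ => ?_
    rw [Finset.sum_mul]
  simp_rw [h1]
  rw [intervalIntegral.integral_const_mul]
  congr 1
  calc (∫ x in (0:ℝ)..1, ∑ m ∈ Finset.range M, ∑ m' ∈ Finset.range M,
        E (((m:ℝ) - m') * x) * g θ (t - x))
      = ∑ m ∈ Finset.range M, ∫ x in (0:ℝ)..1, ∑ m' ∈ Finset.range M,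
          E (((m:ℝ) - m') * x) * g θ (t - x) :=
        intervalIntegral.integral_finset_sum (fun m _ => II_inner θ t M m)
    _ = ∑ m ∈ Finset.range M, ∑ m' ∈ Finset.range M,
          ∫ x in (0:ℝ)..1, E (((m:ℝ) - m') * x) * g θ (t - x) :=
        Finset.sum_congr rfl fun m _ =>
          intervalIntegral.integral_finset_sum
            (fun m' _ => II_char_g θ ((m:ℝ) - m') t 0 1)
    _ = ∑ m ∈ Finset.range M, ∑ m' ∈ Finset.range M,
          E (((m:ℝ) - m') * t) * ghat θ ((m:ℝ) - m') := by
        refine Finset.sum_congr rfl fun m _ => Finset.sum_congr rfl fun m' _ => ?_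
        have hcast : ((m:ℝ) - m') = (((m:ℤ) - m' : ℤ) : ℝ) := by push_cast; ring
        rw [hcast]
        exact conv_eq θ ((m:ℤ) - m') t


lemma intF_complex {M : ℕ} (hM : 1 ≤ M) :
    ∫ s in (0:ℝ)..1, ((F M s : ℝ) : ℂ) = 1 := by
  have h1 : ∀ s : ℝ, ((F M s : ℝ) : ℂ) = (M:ℂ)⁻¹ * ∑ m ∈ Finset.range M,
      ∑ m' ∈ Finset.range M, E (((m:ℝ) - m') * s) := fun s => F_eq_sum M s
  simp_rw [h1]
  rw [intervalIntegral.integral_const_mul]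
  have h2 : (∫ x in (0:ℝ)..1, ∑ m ∈ Finset.range M, ∑ m' ∈ Finset.range M,
      E (((m:ℝ) - m') * x)) = (M:ℂ) := by
    have hii : ∀ (c : ℝ), IntervalIntegrable (fun x : ℝ => E (c * x)) volume 0 1 := by
      intro c
      exact (continuous_E.comp ((continuous_const.mul continuous_id : Continuous fun x : ℝ => c * x))).intervalIntegrable 0 1
    calc (∫ x in (0:ℝ)..1, ∑ m ∈ Finset.range M, ∑ m' ∈ Finset.range M,
        E (((m:ℝ) - m') * x))
        = ∑ m ∈ Finset.range M, ∫ x in (0:ℝ)..1, ∑ m' ∈ Finset.range M,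
            E (((m:ℝ) - m') * x) := by
          apply intervalIntegral.integral_finset_sum
          intro m _
          apply II_of_bdd (C := (M:ℝ)) _ _ 0 1
          · exact Finset.measurable_sum _ (fun m' _ =>
              continuous_E.measurable.comp (measurable_id.const_mul _))
          · intro x
            calc ‖∑ m' ∈ Finset.range M, E (((m:ℝ) - m') * x)‖
                ≤ ∑ m' ∈ Finset.range M, ‖E (((m:ℝ) - m') * x)‖ := norm_sum_le _ _
              _ = ∑ _m' ∈ Finset.range M, (1:ℝ) :=
                  Finset.sum_congr rfl fun m' _ => norm_E _
              _ = M := by simp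
      _ = ∑ m ∈ Finset.range M, ∑ m' ∈ Finset.range M,
            ∫ x in (0:ℝ)..1, E (((m:ℝ) - m') * x) :=
          Finset.sum_congr rfl fun m _ =>
            intervalIntegral.integral_finset_sum (fun m' _ => hii _)
      _ = ∑ m ∈ Finset.range M, ∑ m' ∈ Finset.range M, (if m = m' then (1:ℂ) else 0) :=
          Finset.sum_congr rfl fun m _ => Finset.sum_congr rfl fun m' _ => intE_diag m m'
      _ = ∑ m ∈ Finset.range M, (1:ℂ) := by
          refine Finset.sum_congr rfl fun m hm => ?_
          rw [Finset.sum_ite_eq (Finset.range M) m (fun _ => (1:ℂ)), if_pos hm]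
      _ = (M:ℂ) := by simp
  rw [h2]
  have hM0 : (M:ℂ) ≠ 0 := Nat.cast_ne_zero.2 (by omega)
  field_simp

lemma intF_real {M : ℕ} (hM : 1 ≤ M) : ∫ s in (0:ℝ)..1, F M s = 1 := by
  have h := intF_complex hM
  rw [intervalIntegral.integral_ofReal] at h
  exact_mod_cast h

lemma intF_sym {M : ℕ} (hM : 1 ≤ M) : ∫ s in (-(1/2):ℝ)..(1/2), F M s = 1 := by
  have h := (F_periodic M).intervalIntegral_add_eq (-(1/2)) 0
  norm_num at h
  rw [h]
  exact intF_real hM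

lemma norm_T_le (θ : ℝ) {M : ℕ} (hM : 1 ≤ M) (t : ℝ) : ‖T θ M t‖ ≤ 1 := by
  unfold T
  have h := intervalIntegral.norm_integral_le_of_norm_le
    (f := fun s => ((F M s : ℝ) : ℂ) * g θ (t - s)) (g := fun s => F M s)
    (μ := volume) (a := 0) (b := 1) (by norm_num)
    (Eventually.of_forall (fun s _ => by
      rw [norm_mul, norm_g, mul_one, Complex.norm_real, Real.norm_eq_abs,
        abs_of_nonneg (F_nonneg M s)]))
    ((continuous_F M).intervalIntegrable 0 1)
  rw [intF_real hM] at h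
  simpa using h

/-- Difference as smoothed integral over the symmetric interval. -/
lemma g_sub_T (θ : ℝ) {M : ℕ} (hM : 1 ≤ M) (t : ℝ) :
    g θ t - T θ M t
      = ∫ s in (-(1/2):ℝ)..(1/2), ((F M s : ℝ) : ℂ) * (g θ t - g θ (t - s)) := by
  have hgt : IntervalIntegrable (fun s : ℝ => ((F M s : ℝ) : ℂ) * g θ t) volume 0 1 :=
    (((Complex.continuous_ofReal.comp (continuous_F M)).mul continuous_const)).intervalIntegrable 0 1
  have h1 : g θ t - T θ M t
      = ∫ s in (0:ℝ)..1, ((F M s : ℝ) : ℂ) * (g θ t - g θ (t - s)) := by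
    have h2 : (∫ s in (0:ℝ)..1, ((F M s : ℝ) : ℂ) * (g θ t - g θ (t - s)))
        = (∫ s in (0:ℝ)..1, ((F M s : ℝ) : ℂ) * g θ t) - T θ M t := by
      unfold T
      rw [← intervalIntegral.integral_sub hgt (II_F_g θ t M 0 1)]
      congr 1
      funext s
      ring
    rw [h2, intervalIntegral.integral_mul_const, intF_complex hM, one_mul]
  rw [h1]
  have hper : Function.Periodic
      (fun s : ℝ => ((F M s : ℝ) : ℂ) * (g θ t - g θ (t - s))) 1 := by
    intro s
    simp only
    rw [F_periodic M s]
    congr 2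
    have : t - (s + 1) = (t - s) - (1:ℤ) := by push_cast; ring
    rw [this, g_sub_int]
  have h := hper.intervalIntegral_add_eq (-(1/2)) 0
  norm_num at h
  rw [h]

/-- Floor does not change under small shifts. -/
lemma fract_sub {t s : ℝ} (h : |s| < |t - round t|) : Int.fract (t - s) = Int.fract t - s := by
  have hmin := abs_sub_round_eq_min t
  have h1 : |s| < Int.fract t := by
    rw [hmin] at h
    exact lt_of_lt_of_le h (min_le_left _ _)
  have h2 : |s| < 1 - Int.fract t := by
    rw [hmin] at h
    exact lt_of_lt_of_le h (min_le_right _ _)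
  have hfloor : ⌊t - s⌋ = ⌊t⌋ := by
    rw [Int.floor_eq_iff]
    constructor
    · have : s ≤ |s| := le_abs_self s
      have hf : Int.fract t = t - ⌊t⌋ := rfl
      push_cast
      nlinarith [abs_nonneg s]
    · have : -s ≤ |s| := neg_le_abs s
      have hf : Int.fract t = t - ⌊t⌋ := rfl
      push_cast
      nlinarith [abs_nonneg s]
  rw [Int.fract, Int.fract, hfloor]
  ring

lemma g_diff_bound (θ : ℝ) {t : ℝ} (s : ℝ) (hd : 0 < |t - round t|) :
    ‖g θ t - g θ (t - s)‖ ≤ 2 * π * |θ| * |s| + 2 * s^2 / (t - round t)^2 := by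
  rcases lt_or_ge |s| (|t - round t|) with h | h
  · have hfr := fract_sub h
    have hb : ‖g θ t - g θ (t - s)‖ ≤ 2 * π * |θ| * |s| := by
      unfold g
      rw [hfr]
      refine le_trans (norm_E_sub_E _ _) ?_
      have : |(-θ * Int.fract t) - (-θ * (Int.fract t - s))| = |θ| * |s| := by
        rw [show (-θ * Int.fract t) - (-θ * (Int.fract t - s)) = -(θ * s) by ring,
          abs_neg, abs_mul]
      rw [this]
      ring_nf
      exact le_refl _
    have hpos : 0 ≤ 2 * s^2 / (t - round t)^2 := by positivity
    linarith
  · have h2 : ‖g θ t - g θ (t - s)‖ ≤ 2 := by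
      calc ‖g θ t - g θ (t - s)‖ ≤ ‖g θ t‖ + ‖g θ (t - s)‖ := norm_sub_le _ _
        _ = 2 := by rw [norm_g, norm_g]; norm_num
    have h3 : (t - round t)^2 ≤ s^2 := by
      rw [← sq_abs (t - round t), ← sq_abs s]
      exact pow_le_pow_left₀ (abs_nonneg _) h 2
    have hne : (t - round t) ≠ 0 := fun hc => by simp [hc] at hd
    have h4 : (2:ℝ) ≤ 2 * s^2 / (t - round t)^2 := by
      rw [le_div_iff₀ (by positivity)]
      nlinarith
    have h5 : 0 ≤ 2 * π * |θ| * |s| := by positivity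
    linarith


lemma intF_sq_le {M : ℕ} (hM : 1 ≤ M) :
    ∫ s in (-(1/2):ℝ)..(1/2), F M s * s^2 ≤ 1 / (4 * M) := by
  have h1 : (∫ s in (-(1/2):ℝ)..(1/2), (1 / (4 * M) : ℝ)) = 1 / (4 * M) := by
    rw [intervalIntegral.integral_const]
    norm_num
  rw [← h1]
  apply intervalIntegral.integral_mono_on (by norm_num)
  · exact ((continuous_F M).mul (continuous_pow 2)).intervalIntegrable _ _
  · exact intervalIntegrable_const
  · intro x hx
    apply F_mul_sq_le hM
    rw [abs_le]
    exact ⟨by linarith [hx.1], hx.2⟩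

lemma intF_sq_nonneg (M : ℕ) :
    0 ≤ ∫ s in (-(1/2):ℝ)..(1/2), F M s * s^2 := by
  apply intervalIntegral.integral_nonneg (by norm_num)
  intro x _
  have := F_nonneg M x
  positivity

/-- The key estimate on the difference `g - T`. -/
lemma key_bound (θ : ℝ) {M : ℕ} (hM : 1 ≤ M) {δ' : ℝ} (hδ' : 0 < δ') {t : ℝ}
    (hd : 0 < |t - round t|) :
    ‖g θ t - T θ M t‖
      ≤ 2 * π * |θ| * (δ' + 1 / (4 * M * δ')) + 1 / (2 * M * (t - round t)^2) := by
  have hne : (t - round t) ≠ 0 := fun hc => by simp [hc] at hd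
  have hMpos : (0:ℝ) < M := by exact_mod_cast hM
  set c1 : ℝ := 2 * π * |θ| * δ' with hc1
  set c2 : ℝ := 2 * π * |θ| / δ' + 2 / (t - round t)^2 with hc2
  have hc1nn : 0 ≤ c1 := by rw [hc1]; positivity
  have hc2nn : 0 ≤ c2 := by rw [hc2]; positivity
  have hbd : ∀ s : ℝ, ‖((F M s : ℝ) : ℂ) * (g θ t - g θ (t - s))‖
      ≤ c1 * F M s + c2 * (F M s * s^2) := by
    intro s
    rw [norm_mul, Complex.norm_real, Real.norm_eq_abs, abs_of_nonneg (F_nonneg M s)]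
    have h1 := g_diff_bound θ s hd
    have h2 : |s| ≤ δ' + s^2 / δ' := by
      rcases le_or_gt |s| δ' with h | h
      · have : 0 ≤ s^2 / δ' := by positivity
        linarith
      · have : δ' * δ' ≤ s^2 := by nlinarith [sq_abs s, abs_nonneg s]
        have h3 : |s| ≤ s^2 / δ' := by
          rw [le_div_iff₀ hδ']
          nlinarith [sq_abs s]
        linarith
    have hFnn := F_nonneg M s
    calc F M s * ‖g θ t - g θ (t - s)‖
        ≤ F M s * (2 * π * |θ| * |s| + 2 * s^2 / (t - round t)^2) := by
          apply mul_le_mul_of_nonneg_left h1 hFnn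
      _ ≤ F M s * (2 * π * |θ| * (δ' + s^2 / δ') + 2 * s^2 / (t - round t)^2) := by
          apply mul_le_mul_of_nonneg_left _ hFnn
          have : (0:ℝ) ≤ 2 * π * |θ| := by positivity
          nlinarith
      _ = c1 * F M s + c2 * (F M s * s^2) := by
          rw [hc1, hc2]
          field_simp
          ring
  have hint : ∀ s : ℝ, s ∈ Set.uIoc (-(1/2):ℝ) (1/2) →
      ‖((F M s : ℝ) : ℂ) * (g θ t - g θ (t - s))‖ ≤ c1 * F M s + c2 * (F M s * s^2) :=
    fun s _ => hbd s
  have hcont : IntervalIntegrable (fun s => c1 * F M s + c2 * (F M s * s^2)) volume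
      (-(1/2)) (1/2) :=
    (((continuous_const.mul (continuous_F M) : Continuous fun s => c1 * F M s).add
      (continuous_const.mul ((continuous_F M).mul (continuous_pow 2)) : Continuous fun s => c2 * (F M s * s^2)))).intervalIntegrable _ _
  rw [g_sub_T θ hM t]
  have hnorm := intervalIntegral.norm_integral_le_abs_of_norm_le
    (f := fun s => ((F M s : ℝ) : ℂ) * (g θ t - g θ (t - s)))
    (g := fun s => c1 * F M s + c2 * (F M s * s^2)) (μ := volume)
    (a := -(1/2)) (b := 1/2) (Eventually.of_forall hbd) hcont
  have hval : (∫ s in (-(1/2):ℝ)..(1/2), (c1 * F M s + c2 * (F M s * s^2)))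
      = c1 + c2 * ∫ s in (-(1/2):ℝ)..(1/2), F M s * s^2 := by
    rw [intervalIntegral.integral_add (f := fun s => c1 * F M s) (g := fun s => c2 * (F M s * s^2))
        ((continuous_const.mul (continuous_F M) : Continuous fun s => c1 * F M s).intervalIntegrable _ _)
        ((continuous_const.mul ((continuous_F M).mul (continuous_pow 2)) : Continuous fun s => c2 * (F M s * s^2)).intervalIntegrable _ _),
      intervalIntegral.integral_const_mul, intervalIntegral.integral_const_mul,
      intF_sym hM, mul_one]
  have hfin : c1 + c2 * (∫ s in (-(1/2):ℝ)..(1/2), F M s * s^2)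
      ≤ 2 * π * |θ| * (δ' + 1 / (4 * M * δ')) + 1 / (2 * M * (t - round t)^2) := by
    have h5 := intF_sq_le hM
    have h6 := intF_sq_nonneg M
    have : c2 * (∫ s in (-(1/2):ℝ)..(1/2), F M s * s^2) ≤ c2 * (1 / (4 * M)) :=
      mul_le_mul_of_nonneg_left h5 hc2nn
    have heq : c1 + c2 * (1 / (4 * M))
        = 2 * π * |θ| * (δ' + 1 / (4 * M * δ')) + 1 / (2 * M * (t - round t)^2) := by
      rw [hc1, hc2]
      field_simp
      ring
    linarith
  have habs : |∫ s in (-(1/2):ℝ)..(1/2), (c1 * F M s + c2 * (F M s * s^2))|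
      = ∫ s in (-(1/2):ℝ)..(1/2), (c1 * F M s + c2 * (F M s * s^2)) := by
    rw [abs_of_nonneg]
    apply intervalIntegral.integral_nonneg (by norm_num)
    intro x _
    have := F_nonneg M x
    have h7 : 0 ≤ F M x * x^2 := by positivity
    nlinarith
  rw [habs, hval] at hnorm
  linarith

/-- Combined pointwise bound in terms of the Fejér kernel. -/
lemma combined (θ : ℝ) {M L : ℕ} (hM : 1 ≤ M) (hL : 1 ≤ L) {δ' : ℝ} (hδ' : 0 < δ') (t : ℝ) :
    ‖g θ t - T θ M t‖
      ≤ (2 * π * |θ| * (δ' + 1 / (4 * M * δ')) + 32 * L^2 / M) + (8 / L) * F L t := by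
  have hMpos : (0:ℝ) < M := by exact_mod_cast hM
  have hLpos : (0:ℝ) < L := by exact_mod_cast hL
  rcases le_or_gt (|t - round t|) (1/(8*L)) with h | h
  · have hF := F_lower hL h
    have h2 : ‖g θ t - T θ M t‖ ≤ 2 := by
      calc ‖g θ t - T θ M t‖ ≤ ‖g θ t‖ + ‖T θ M t‖ := norm_sub_le _ _
        _ ≤ 1 + 1 := by
            rw [norm_g]
            exact add_le_add le_rfl (norm_T_le θ hM t)
        _ = 2 := by norm_num
    have h3 : (2:ℝ) ≤ (8 / L) * F L t := by
      calc (2:ℝ) = (8 / L) * (L / 4) := by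
            field_simp
            ring
        _ ≤ (8 / L) * F L t := by
            apply mul_le_mul_of_nonneg_left hF (by positivity)
    have h4 : (0:ℝ) ≤ 2 * π * |θ| * (δ' + 1 / (4 * M * δ')) + 32 * L^2 / M := by positivity
    linarith
  · have hd : 0 < |t - round t| := lt_trans (by positivity) h
    have hkb := key_bound θ hM hδ' hd
    have hne : (t - round t) ≠ 0 := fun hc => by simp [hc] at hd
    have h5 : 1 / (2 * M * (t - round t)^2) ≤ 32 * L^2 / M := by
      have h6 : (1/(8*L))^2 ≤ (t - round t)^2 := by
        rw [← sq_abs (t - round t)]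
        apply pow_le_pow_left₀ (by positivity) h.le
      rw [div_le_div_iff₀ (by positivity) hMpos]
      have h9 : ((1:ℝ)/(8*(L:ℝ)))^2 = 1/(64*(L:ℝ)^2) := by
        field_simp
        ring
      rw [h9] at h6
      have h11 : (M:ℝ) ≤ 64 * (L:ℝ)^2 * M * ((t - round t)^2) := by
        have h12 := mul_le_mul_of_nonneg_left h6
          (show (0:ℝ) ≤ 64 * (L:ℝ)^2 * M by positivity)
        calc (M:ℝ) = 64 * (L:ℝ)^2 * M * (1/(64*(L:ℝ)^2)) := by
              field_simp
          _ ≤ 64 * (L:ℝ)^2 * M * ((t - round t)^2) := h12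
      nlinarith [h11]
    have h7 : (0:ℝ) ≤ (8 / L) * F L t := by
      have := F_nonneg L t
      positivity
    linarith


lemma E_floor (θ t : ℝ) : E (θ * ⌊t⌋) = E (θ * t) * g θ t := by
  unfold g
  rw [← E_add]
  congr 1
  rw [Int.fract]
  ring

/-- The smoothed weighted sums tend to zero. -/
lemma W1_tendsto (a : ℕ → ℝ) (θ : ℝ)
    (hW : ∀ β : ℝ, β ≠ 0 → Tendsto (fun N : ℕ =>
      (N:ℂ)⁻¹ * ∑ n ∈ Finset.Icc 1 N, E (β * a n)) atTop (nhds 0))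
    (hθ : ∀ j : ℤ, θ + j ≠ 0) (M : ℕ) :
    Tendsto (fun N : ℕ => (N:ℂ)⁻¹ * ∑ n ∈ Finset.Icc 1 N, E (θ * a n) * T θ M (a n))
      atTop (nhds 0) := by
  have hne : ∀ (m m' : ℕ), θ + ((m:ℝ) - m') ≠ 0 := by
    intro m m'
    have h := hθ ((m:ℤ) - m')
    intro hc
    apply h
    push_cast
    push_cast at hc
    linarith
  have heq : ∀ N : ℕ, (N:ℂ)⁻¹ * ∑ n ∈ Finset.Icc 1 N, E (θ * a n) * T θ M (a n)
      = ∑ m ∈ Finset.range M, ∑ m' ∈ Finset.range M,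
          ((M:ℂ)⁻¹ * ghat θ ((m:ℝ) - m')) *
            ((N:ℂ)⁻¹ * ∑ n ∈ Finset.Icc 1 N, E ((θ + ((m:ℝ) - m')) * a n)) := by
    intro N
    have hterm : ∀ x : ℝ, E (θ * x) * T θ M x
        = ∑ m ∈ Finset.range M, ∑ m' ∈ Finset.range M,
            ((M:ℂ)⁻¹ * ghat θ ((m:ℝ) - m')) * E ((θ + ((m:ℝ) - m')) * x) := by
      intro x
      rw [T_eq]
      rw [Finset.mul_sum, Finset.mul_sum]
      refine Finset.sum_congr rfl fun m _ => ?_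
      rw [Finset.mul_sum, Finset.mul_sum]
      refine Finset.sum_congr rfl fun m' _ => ?_
      rw [show (θ + ((m:ℝ) - m')) * x = θ * x + ((m:ℝ) - m') * x by ring, E_add]
      ring
    simp_rw [hterm]
    simp only [Finset.mul_sum]
    rw [Finset.sum_comm]
    refine Finset.sum_congr rfl fun m _ => ?_
    rw [Finset.sum_comm]
    refine Finset.sum_congr rfl fun m' _ => Finset.sum_congr rfl fun n _ => ?_
    ring
  have htend : Tendsto (fun N : ℕ => ∑ m ∈ Finset.range M, ∑ m' ∈ Finset.range M,
      ((M:ℂ)⁻¹ * ghat θ ((m:ℝ) - m')) *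
        ((N:ℂ)⁻¹ * ∑ n ∈ Finset.Icc 1 N, E ((θ + ((m:ℝ) - m')) * a n)))
      atTop (nhds 0) := by
    have h0 : (0:ℂ) = ∑ m ∈ Finset.range M, ∑ m' ∈ Finset.range M, (0:ℂ) := by simp
    rw [h0]
    apply tendsto_finset_sum
    intro m _
    apply tendsto_finset_sum
    intro m' _
    have := (hW (θ + ((m:ℝ) - m')) (hne m m')).const_mul ((M:ℂ)⁻¹ * ghat θ ((m:ℝ) - m'))
    simpa using this
  exact htend.congr (fun N => (heq N).symm)

/-- Averages of the Fejér kernel along the sequence tend to `1`. -/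
lemma R_tendsto (a : ℕ → ℝ)
    (hW : ∀ β : ℝ, β ≠ 0 → Tendsto (fun N : ℕ =>
      (N:ℂ)⁻¹ * ∑ n ∈ Finset.Icc 1 N, E (β * a n)) atTop (nhds 0))
    {L : ℕ} (hL : 1 ≤ L) :
    Tendsto (fun N : ℕ => (N:ℂ)⁻¹ * ∑ n ∈ Finset.Icc 1 N, ((F L (a n) : ℝ) : ℂ))
      atTop (nhds 1) := by
  have heq : ∀ N : ℕ, (N:ℂ)⁻¹ * ∑ n ∈ Finset.Icc 1 N, ((F L (a n) : ℝ) : ℂ)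
      = ∑ m ∈ Finset.range L, ∑ m' ∈ Finset.range L,
          (L:ℂ)⁻¹ * ((N:ℂ)⁻¹ * ∑ n ∈ Finset.Icc 1 N, E (((m:ℝ) - m') * a n)) := by
    intro N
    have hterm : ∀ x : ℝ, ((F L x : ℝ) : ℂ)
        = ∑ m ∈ Finset.range L, ∑ m' ∈ Finset.range L, (L:ℂ)⁻¹ * E (((m:ℝ) - m') * x) := by
      intro x
      rw [F_eq_sum, Finset.mul_sum]
      refine Finset.sum_congr rfl fun m _ => ?_
      rw [Finset.mul_sum]
    simp_rw [hterm]
    simp only [Finset.mul_sum]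
    rw [Finset.sum_comm]
    refine Finset.sum_congr rfl fun m _ => ?_
    rw [Finset.sum_comm]
    refine Finset.sum_congr rfl fun m' _ => Finset.sum_congr rfl fun n _ => ?_
    ring
  have hdiag : Tendsto (fun N : ℕ =>
      (N:ℂ)⁻¹ * ∑ n ∈ Finset.Icc 1 N, E ((0:ℝ) * a n)) atTop (nhds 1) := by
    have h1 : ∀ N : ℕ, 1 ≤ N → (N:ℂ)⁻¹ * ∑ n ∈ Finset.Icc 1 N, E ((0:ℝ) * a n) = 1 := by
      intro N hN
      have : ∀ n : ℕ, E ((0:ℝ) * a n) = 1 := by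
        intro n
        rw [zero_mul]
        simpa using E_int 0
      simp_rw [this]
      rw [Finset.sum_const, Nat.card_Icc]
      simp only [nsmul_eq_mul, mul_one]
      have hN0 : (N:ℂ) ≠ 0 := Nat.cast_ne_zero.2 (by omega)
      have : (N + 1 - 1 : ℕ) = N := by omega
      rw [this]
      field_simp
    apply Tendsto.congr' _ tendsto_const_nhds
    filter_upwards [eventually_ge_atTop 1] with N hN
    exact (h1 N hN).symm
  have htend : Tendsto (fun N : ℕ => ∑ m ∈ Finset.range L, ∑ m' ∈ Finset.range L,
      (L:ℂ)⁻¹ * ((N:ℂ)⁻¹ * ∑ n ∈ Finset.Icc 1 N, E (((m:ℝ) - m') * a n)))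
      atTop (nhds 1) := by
    have hlim : (1:ℂ) = ∑ m ∈ Finset.range L, ∑ m' ∈ Finset.range L,
        (L:ℂ)⁻¹ * (if m = m' then 1 else 0) := by
      have : ∀ m ∈ Finset.range L, ∑ m' ∈ Finset.range L,
          (L:ℂ)⁻¹ * (if m = m' then (1:ℂ) else 0) = (L:ℂ)⁻¹ := by
        intro m hm
        rw [← Finset.mul_sum, Finset.sum_ite_eq (Finset.range L) m (fun _ => (1:ℂ)),
          if_pos hm, mul_one]
      rw [Finset.sum_congr rfl this, Finset.sum_const, Finset.card_range]
      have hL0 : (L:ℂ) ≠ 0 := Nat.cast_ne_zero.2 (by omega)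
      simp only [nsmul_eq_mul]
      field_simp
    rw [hlim]
    apply tendsto_finset_sum
    intro m _
    apply tendsto_finset_sum
    intro m' _
    rcases eq_or_ne m m' with rfl | hne
    · simp only [if_pos rfl, sub_self]
      have := hdiag.const_mul ((L:ℂ)⁻¹)
      simpa using this
    · rw [if_neg hne]
      have hne' : ((m:ℝ) - m') ≠ 0 := by
        intro hc
        apply hne
        have : (m:ℝ) = m' := by linarith
        exact_mod_cast this
      have := (hW ((m:ℝ) - m') hne').const_mul ((L:ℂ)⁻¹)
      simpa using this
  exact htend.congr (fun N => (heq N).symm)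

end Stmt15Aux

set_option maxHeartbeats 2000000 in
open Stmt15Aux in
/-- If `(a(n)·β)` is equidistributed mod 1 for every nonzero real `β`
(Weyl criterion form) and `α` is irrational, then `(⌊a(n)⌋·α)` is equidistributed mod 1. -/
theorem stmt15 (a : ℕ → ℝ)
    (hweyl : ∀ β : ℝ, β ≠ 0 →
      Tendsto (fun N : ℕ => (N : ℂ)⁻¹ *
        ∑ n ∈ Finset.Icc 1 N, Complex.exp (2 * π * Complex.I * (β * a n)))
        atTop (nhds 0))
    (α : ℝ) (hα : Irrational α) (k : ℤ) (hk : k ≠ 0) :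
    Tendsto (fun N : ℕ => (N : ℂ)⁻¹ *
        ∑ n ∈ Finset.Icc 1 N, Complex.exp (2 * π * Complex.I * ((k : ℝ) * (⌊a n⌋ : ℝ) * α)))
      atTop (nhds 0) := by
  classical
  set θ : ℝ := (k:ℝ) * α with hθdef
  have hW : ∀ β : ℝ, β ≠ 0 → Tendsto (fun N : ℕ =>
      (N:ℂ)⁻¹ * ∑ n ∈ Finset.Icc 1 N, E (β * a n)) atTop (nhds 0) := by
    intro β hβ
    have h := hweyl β hβ
    simp only [E, Complex.ofReal_mul]
    exact h
  have hk' : (k:ℝ) ≠ 0 := Int.cast_ne_zero.2 hk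
  have hθj : ∀ j : ℤ, θ + j ≠ 0 := by
    intro j hc
    apply hα
    refine ⟨(-j : ℚ) / (k : ℚ), ?_⟩
    have hα' : α = (-j : ℝ) / (k : ℝ) := by
      rw [hθdef] at hc
      field_simp
      linarith
    push_cast
    rw [hα']
  rw [NormedAddCommGroup.tendsto_nhds_zero]
  intro ε hε
  set Θ : ℝ := 2 * π * |θ| with hΘdef
  have hΘnn : 0 ≤ Θ := by rw [hΘdef]; positivity
  -- choose L
  obtain ⟨L₀, hL₀⟩ := exists_nat_ge (64 / ε)
  set L : ℕ := L₀ + 1 with hLdef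
  have hL : 1 ≤ L := by omega
  have hLpos : (0:ℝ) < L := by exact_mod_cast hL
  have hLge : 64 / ε ≤ (L:ℝ) := hL₀.trans (by exact_mod_cast Nat.le_succ L₀)
  have hLbound : (16:ℝ) / L ≤ ε / 4 := by
    rw [div_le_div_iff₀ hLpos (by norm_num)]
    have h64 : 64 ≤ (L:ℝ) * ε := by
      rw [div_le_iff₀ hε] at hLge
      linarith
    linarith
  -- choose δ'
  set δ' : ℝ := ε / (16 * (Θ + 1)) with hδdef
  have hδ' : 0 < δ' := by rw [hδdef]; positivity
  have hΘδ : Θ * δ' ≤ ε / 16 := by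
    have heq : Θ * δ' = Θ * ε / (16 * (Θ + 1)) := by rw [hδdef]; ring
    rw [heq, div_le_div_iff₀ (by positivity) (by norm_num : (0:ℝ) < 16)]
    nlinarith
  -- choose M
  obtain ⟨M₀, hM₀⟩ := exists_nat_ge
    (max (Θ / (4 * δ' * (ε / 16))) ((32 * (L:ℝ)^2) / (ε / 16)))
  set M : ℕ := M₀ + 1 with hMdef
  have hM : 1 ≤ M := by omega
  have hMpos : (0:ℝ) < M := by exact_mod_cast hM
  have hMge : max (Θ / (4 * δ' * (ε / 16))) ((32 * (L:ℝ)^2) / (ε / 16)) ≤ (M:ℝ) :=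
    hM₀.trans (by exact_mod_cast Nat.le_succ M₀)
  have hA : Θ * (1 / (4 * M * δ')) ≤ ε / 16 := by
    have h1 : Θ / (4 * δ' * (ε / 16)) ≤ (M:ℝ) := le_trans (le_max_left _ _) hMge
    rw [div_le_iff₀ (by positivity)] at h1
    rw [show Θ * (1 / (4 * M * δ')) = Θ / (4 * M * δ') by ring]
    rw [div_le_iff₀ (by positivity)]
    nlinarith
  have hB : 32 * (L:ℝ)^2 / M ≤ ε / 16 := by
    have h1 : (32 * (L:ℝ)^2) / (ε / 16) ≤ (M:ℝ) := le_trans (le_max_right _ _) hMge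
    rw [div_le_iff₀ (by positivity)] at h1
    rw [div_le_iff₀ hMpos]
    nlinarith
  -- decomposition
  have hdecomp : ∀ N : ℕ, (N : ℂ)⁻¹ *
      ∑ n ∈ Finset.Icc 1 N, Complex.exp (2 * π * Complex.I * ((k : ℝ) * (⌊a n⌋ : ℝ) * α))
      = ((N:ℂ)⁻¹ * ∑ n ∈ Finset.Icc 1 N, E (θ * a n) * T θ M (a n))
        + ((N:ℂ)⁻¹ * ∑ n ∈ Finset.Icc 1 N, E (θ * a n) * (g θ (a n) - T θ M (a n))) := by
    intro N
    rw [← mul_add, ← Finset.sum_add_distrib]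
    congr 1
    refine Finset.sum_congr rfl fun n _ => ?_
    have h1 : Complex.exp (2 * π * Complex.I * ((k : ℝ) * (⌊a n⌋ : ℝ) * α))
        = E (θ * (⌊a n⌋ : ℝ)) := by
      rw [E]
      congr 1
      rw [hθdef]
      push_cast
      ring
    rw [h1, E_floor θ (a n)]
    ring
  -- limit facts
  have h1 := W1_tendsto a θ hW hθj M
  have h2 := R_tendsto a hW hL
  have h2re : Tendsto (fun N : ℕ =>
      ((N:ℂ)⁻¹ * ∑ n ∈ Finset.Icc 1 N, ((F L (a n) : ℝ) : ℂ)).re) atTop (nhds 1) := by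
    have h3 := (Complex.continuous_re.tendsto 1).comp h2
    rw [Complex.one_re] at h3
    exact h3
  have hE1 : ∀ᶠ N : ℕ in atTop,
      ‖(N:ℂ)⁻¹ * ∑ n ∈ Finset.Icc 1 N, E (θ * a n) * T θ M (a n)‖ < ε / 4 :=
    (NormedAddCommGroup.tendsto_nhds_zero.1 h1) (ε / 4) (by positivity)
  have hE2 : ∀ᶠ N : ℕ in atTop,
      ((N:ℂ)⁻¹ * ∑ n ∈ Finset.Icc 1 N, ((F L (a n) : ℝ) : ℂ)).re < 2 :=
    h2re.eventually_lt_const (by norm_num)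
  filter_upwards [hE1, hE2, eventually_ge_atTop 1] with N hN1 hN2 hN3
  rw [hdecomp N]
  have hNpos : (0:ℝ) < N := by exact_mod_cast hN3
  -- bound the remainder term
  set B : ℝ := Θ * (δ' + 1 / (4 * M * δ')) + 32 * (L:ℝ)^2 / M with hBdef
  have hre : ((N:ℂ)⁻¹ * ∑ n ∈ Finset.Icc 1 N, ((F L (a n) : ℝ) : ℂ)).re
      = (N:ℝ)⁻¹ * ∑ n ∈ Finset.Icc 1 N, F L (a n) := by
    have : ((N:ℂ)⁻¹ * ∑ n ∈ Finset.Icc 1 N, ((F L (a n) : ℝ) : ℂ))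
        = (((N:ℝ)⁻¹ * ∑ n ∈ Finset.Icc 1 N, F L (a n) : ℝ) : ℂ) := by
      push_cast
      ring
    rw [this, Complex.ofReal_re]
  have hW2 : ‖(N:ℂ)⁻¹ * ∑ n ∈ Finset.Icc 1 N, E (θ * a n) * (g θ (a n) - T θ M (a n))‖
      ≤ B + (8 / L) * ((N:ℝ)⁻¹ * ∑ n ∈ Finset.Icc 1 N, F L (a n)) := by
    have hnorm1 : ‖(N:ℂ)⁻¹ * ∑ n ∈ Finset.Icc 1 N, E (θ * a n) * (g θ (a n) - T θ M (a n))‖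
        ≤ (N:ℝ)⁻¹ * ∑ n ∈ Finset.Icc 1 N, ‖g θ (a n) - T θ M (a n)‖ := by
      rw [norm_mul]
      have hni : ‖(N:ℂ)⁻¹‖ = (N:ℝ)⁻¹ := by
        rw [norm_inv, Complex.norm_natCast]
      rw [hni]
      apply mul_le_mul_of_nonneg_left _ (by positivity)
      calc ‖∑ n ∈ Finset.Icc 1 N, E (θ * a n) * (g θ (a n) - T θ M (a n))‖
          ≤ ∑ n ∈ Finset.Icc 1 N, ‖E (θ * a n) * (g θ (a n) - T θ M (a n))‖ :=
            norm_sum_le _ _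
        _ = ∑ n ∈ Finset.Icc 1 N, ‖g θ (a n) - T θ M (a n)‖ :=
            Finset.sum_congr rfl fun n _ => by rw [norm_mul, norm_E, one_mul]
    have hsum : ∑ n ∈ Finset.Icc 1 N, ‖g θ (a n) - T θ M (a n)‖
        ≤ ∑ n ∈ Finset.Icc 1 N, (B + (8 / L) * F L (a n)) := by
      apply Finset.sum_le_sum
      intro n _
      have := combined θ hM hL hδ' (a n)
      rw [hBdef, hΘdef]
      linarith
    have hdist : (N:ℝ)⁻¹ * ∑ n ∈ Finset.Icc 1 N, (B + (8 / L) * F L (a n))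
        = B + (8 / L) * ((N:ℝ)⁻¹ * ∑ n ∈ Finset.Icc 1 N, F L (a n)) := by
      rw [Finset.sum_add_distrib, Finset.sum_const, Nat.card_Icc]
      rw [← Finset.mul_sum]
      have hNcard : (N + 1 - 1 : ℕ) = N := by omega
      rw [hNcard]
      have hN0 : (N:ℝ) ≠ 0 := ne_of_gt hNpos
      field_simp
      ring
    calc ‖(N:ℂ)⁻¹ * ∑ n ∈ Finset.Icc 1 N, E (θ * a n) * (g θ (a n) - T θ M (a n))‖
        ≤ (N:ℝ)⁻¹ * ∑ n ∈ Finset.Icc 1 N, ‖g θ (a n) - T θ M (a n)‖ := hnorm1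
      _ ≤ (N:ℝ)⁻¹ * ∑ n ∈ Finset.Icc 1 N, (B + (8 / L) * F L (a n)) := by
          apply mul_le_mul_of_nonneg_left hsum (by positivity)
      _ = B + (8 / L) * ((N:ℝ)⁻¹ * ∑ n ∈ Finset.Icc 1 N, F L (a n)) := hdist
  -- final numeric bound
  have hBsmall : B ≤ 3 * ε / 16 := by
    rw [hBdef]
    have h1 : Θ * (δ' + 1 / (4 * M * δ')) = Θ * δ' + Θ * (1 / (4 * M * δ')) := by ring
    rw [h1]
    linarith
  have hFsmall : (8 / L) * ((N:ℝ)⁻¹ * ∑ n ∈ Finset.Icc 1 N, F L (a n)) ≤ 16 / L := by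
    rw [← hre]
    have h8L : (0:ℝ) ≤ 8 / L := by positivity
    calc (8 / L) * ((N:ℂ)⁻¹ * ∑ n ∈ Finset.Icc 1 N, ((F L (a n) : ℝ) : ℂ)).re
        ≤ (8 / L) * 2 := mul_le_mul_of_nonneg_left hN2.le h8L
      _ = 16 / L := by ring
  calc ‖((N:ℂ)⁻¹ * ∑ n ∈ Finset.Icc 1 N, E (θ * a n) * T θ M (a n))
        + ((N:ℂ)⁻¹ * ∑ n ∈ Finset.Icc 1 N, E (θ * a n) * (g θ (a n) - T θ M (a n)))‖
      ≤ ‖(N:ℂ)⁻¹ * ∑ n ∈ Finset.Icc 1 N, E (θ * a n) * T θ M (a n)‖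
        + ‖(N:ℂ)⁻¹ * ∑ n ∈ Finset.Icc 1 N, E (θ * a n) * (g θ (a n) - T θ M (a n))‖ :=
        norm_add_le _ _
    _ ≤ ‖(N:ℂ)⁻¹ * ∑ n ∈ Finset.Icc 1 N, E (θ * a n) * T θ M (a n)‖
        + (B + (8 / L) * ((N:ℝ)⁻¹ * ∑ n ∈ Finset.Icc 1 N, F L (a n))) := by linarith
    _ < ε / 4 + (3 * ε / 16 + 16 / L) := by linarith
    _ ≤ ε / 4 + (3 * ε / 16 + ε / 4) := by linarith
    _ < ε := by linarith

end
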